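/- Let f ∈ K{y₀,…,yₙ} be a differential polynomial over an ordinary differential field K of characteristic zero (a polynomial in indeterminates y_j^{(k)}, j = 0,…,n, k ∈ ℕ, with derivation δ(y_j^{(k)}) = y_j^{(k+1)}). Then f is differentially homogeneous of degree m (meaning f(λy₀,…,λyₙ) = λ^m f(y₀,…,yₙ) as an identity in K{λ, y₀,…,yₙ} for a differential indeterminate λ, where λy_j is differentiated by the Leibniz rule) if and only if for every r ∈ ℕ: Σ_{j=0}^{n} Σ_{k ∈ ℕ} binom(k+r, r) · y_j^{(k)} · ∂f/∂(y_j^{(k+r)}) equals m·f when r = 0, and equals 0 when r ≠ 0. -/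

import Mathlib

open MvPolynomial

namespace Stmt14Aux

set_option linter.unusedSectionVars false

noncomputable section

variable (K : Type*) [Field K] [CharZero K] (n : ℕ)

local notation "σ'" => (Fin (n+1) × ℕ)
local notation "τ'" => (Option (Fin (n+1)) × ℕ)

def Ssub (v : Fin (n + 1) × ℕ) : MvPolynomial (Option (Fin (n + 1)) × ℕ) K :=
  ∑ i ∈ Finset.range (v.2 + 1),
    (Nat.choose v.2 i : MvPolynomial (Option (Fin (n + 1)) × ℕ) K) *
      X ((none : Option (Fin (n + 1))), i) * X (some v.1, v.2 - i)

def Φ : MvPolynomial σ' K →ₐ[K] MvPolynomial τ' K := aeval (Ssub K n)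

def ρ : MvPolynomial σ' K →ₐ[K] MvPolynomial τ' K :=
  rename (fun v : Fin (n + 1) × ℕ => ((some v.1 : Option (Fin (n + 1))), v.2))

def ε' : MvPolynomial τ' K →ₐ[K] MvPolynomial σ' K :=
  aeval (fun w : Option (Fin (n + 1)) × ℕ =>
    match w with
    | (none, i) => if i = 0 then 1 else 0
    | (some j, k) => X (j, k))

def E (r : ℕ) (f : MvPolynomial σ' K) : MvPolynomial σ' K :=
  ∑ᶠ (j : Fin (n + 1)) (k : ℕ),
    (Nat.choose (k + r) r : MvPolynomial σ' K) * (X (j, k) * pderiv (j, k + r) f)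

def L (r : ℕ) (P : MvPolynomial τ' K) : MvPolynomial τ' K :=
  ∑ᶠ (i : ℕ),
    (Nat.choose (i + r) r : MvPolynomial τ' K) *
      (X ((none : Option (Fin (n + 1))), i) * pderiv (none, i + r) P)

variable {K n}

lemma E_eq (r N : ℕ) (f : MvPolynomial σ' K) (hN : ∀ v ∈ f.vars, v.2 < N) :
    E K n r f = ∑ j : Fin (n + 1), ∑ k ∈ Finset.range N,
      (Nat.choose (k + r) r : MvPolynomial σ' K) * (X (j, k) * pderiv (j, k + r) f) := by
  rw [E, finsum_eq_sum_of_fintype]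
  refine Finset.sum_congr rfl fun j _ => ?_
  refine finsum_eq_finset_sum_of_support_subset _ ?_
  intro k hk
  simp only [Function.mem_support] at hk
  simp only [Finset.coe_range, Set.mem_Iio]
  by_contra hlt
  push_neg at hlt
  have h0 : pderiv (j, k + r) f = 0 := by
    refine pderiv_eq_zero_of_notMem_vars fun hv => ?_
    have := hN _ hv
    omega
  rw [h0, mul_zero, mul_zero] at hk
  exact hk rfl

lemma L_eq (r N : ℕ) (P : MvPolynomial τ' K) (hN : ∀ v ∈ P.vars, v.2 < N) :
    L K n r P = ∑ i ∈ Finset.range N,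
      (Nat.choose (i + r) r : MvPolynomial τ' K) *
        (X ((none : Option (Fin (n + 1))), i) * pderiv (none, i + r) P) := by
  rw [L]
  refine finsum_eq_finset_sum_of_support_subset _ ?_
  intro i hi
  simp only [Function.mem_support] at hi
  simp only [Finset.coe_range, Set.mem_Iio]
  by_contra hlt
  push_neg at hlt
  have h0 : pderiv ((none : Option (Fin (n+1))), i + r) P = 0 := by
    refine pderiv_eq_zero_of_notMem_vars fun hv => ?_
    have := hN _ hv
    omega
  rw [h0, mul_zero, mul_zero] at hi
  exact hi rfl

lemma E_add (r : ℕ) (f g : MvPolynomial σ' K) :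
    E K n r (f + g) = E K n r f + E K n r g := by
  classical
  set N : ℕ := ((f.vars ∪ g.vars).sup Prod.snd) + 1 with hNdef
  have hmem : ∀ v ∈ f.vars ∪ g.vars, v.2 < N := fun v hv =>
    Nat.lt_succ_of_le (Finset.le_sup (f := Prod.snd) hv)
  have hf : ∀ v ∈ f.vars, v.2 < N := fun v hv => hmem v (Finset.mem_union_left _ hv)
  have hg : ∀ v ∈ g.vars, v.2 < N := fun v hv => hmem v (Finset.mem_union_right _ hv)
  have hfg : ∀ v ∈ (f + g).vars, v.2 < N := fun v hv => hmem v (vars_add_subset f g hv)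
  rw [E_eq r N _ hfg, E_eq r N _ hf, E_eq r N _ hg, ← Finset.sum_add_distrib]
  refine Finset.sum_congr rfl fun j _ => ?_
  rw [← Finset.sum_add_distrib]
  refine Finset.sum_congr rfl fun k _ => ?_
  rw [map_add]; ring

lemma E_mul (r : ℕ) (f g : MvPolynomial σ' K) :
    E K n r (f * g) = E K n r f * g + f * E K n r g := by
  classical
  set N : ℕ := ((f.vars ∪ g.vars).sup Prod.snd) + 1 with hNdef
  have hmem : ∀ v ∈ f.vars ∪ g.vars, v.2 < N := fun v hv =>
    Nat.lt_succ_of_le (Finset.le_sup (f := Prod.snd) hv)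
  have hf : ∀ v ∈ f.vars, v.2 < N := fun v hv => hmem v (Finset.mem_union_left _ hv)
  have hg : ∀ v ∈ g.vars, v.2 < N := fun v hv => hmem v (Finset.mem_union_right _ hv)
  have hfg : ∀ v ∈ (f * g).vars, v.2 < N := fun v hv => hmem v (vars_mul f g hv)
  rw [E_eq r N _ hfg, E_eq r N _ hf, E_eq r N _ hg]
  simp only [Finset.sum_mul, Finset.mul_sum, ← Finset.sum_add_distrib]
  refine Finset.sum_congr rfl fun j _ => Finset.sum_congr rfl fun k _ => ?_
  rw [pderiv_mul]; ring

lemma L_add (r : ℕ) (f g : MvPolynomial τ' K) :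
    L K n r (f + g) = L K n r f + L K n r g := by
  classical
  set N : ℕ := ((f.vars ∪ g.vars).sup Prod.snd) + 1 with hNdef
  have hmem : ∀ v ∈ f.vars ∪ g.vars, v.2 < N := fun v hv =>
    Nat.lt_succ_of_le (Finset.le_sup (f := Prod.snd) hv)
  have hf : ∀ v ∈ f.vars, v.2 < N := fun v hv => hmem v (Finset.mem_union_left _ hv)
  have hg : ∀ v ∈ g.vars, v.2 < N := fun v hv => hmem v (Finset.mem_union_right _ hv)
  have hfg : ∀ v ∈ (f + g).vars, v.2 < N := fun v hv => hmem v (vars_add_subset f g hv)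
  rw [L_eq r N _ hfg, L_eq r N _ hf, L_eq r N _ hg, ← Finset.sum_add_distrib]
  refine Finset.sum_congr rfl fun k _ => ?_
  rw [map_add]; ring

lemma L_mul (r : ℕ) (f g : MvPolynomial τ' K) :
    L K n r (f * g) = L K n r f * g + f * L K n r g := by
  classical
  set N : ℕ := ((f.vars ∪ g.vars).sup Prod.snd) + 1 with hNdef
  have hmem : ∀ v ∈ f.vars ∪ g.vars, v.2 < N := fun v hv =>
    Nat.lt_succ_of_le (Finset.le_sup (f := Prod.snd) hv)
  have hf : ∀ v ∈ f.vars, v.2 < N := fun v hv => hmem v (Finset.mem_union_left _ hv)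
  have hg : ∀ v ∈ g.vars, v.2 < N := fun v hv => hmem v (Finset.mem_union_right _ hv)
  have hfg : ∀ v ∈ (f * g).vars, v.2 < N := fun v hv => hmem v (vars_mul f g hv)
  rw [L_eq r N _ hfg, L_eq r N _ hf, L_eq r N _ hg]
  simp only [Finset.sum_mul, Finset.mul_sum, ← Finset.sum_add_distrib]
  refine Finset.sum_congr rfl fun k _ => ?_
  rw [pderiv_mul]; ring

lemma E_C (r : ℕ) (c : K) : E K n r (C c) = 0 := by
  simp only [E, pderiv_C, mul_zero, finsum_zero]

lemma L_C (r : ℕ) (c : K) : L K n r (C c) = 0 := by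
  simp only [L, pderiv_C, mul_zero, finsum_zero]

lemma L_zero (r : ℕ) : L K n r (0 : MvPolynomial τ' K) = 0 := by
  simp only [L, map_zero, mul_zero, finsum_zero]

lemma L_natCast (r c : ℕ) : L K n r ((c : MvPolynomial τ' K)) = 0 := by
  rw [← C_eq_coe_nat]; exact L_C r _

lemma L_sum {α : Type*} (r : ℕ) (s : Finset α) (F : α → MvPolynomial τ' K) :
    L K n r (∑ a ∈ s, F a) = ∑ a ∈ s, L K n r (F a) := by
  classical
  induction s using Finset.induction_on with
  | empty => simpa using L_zero r
  | @insert a s h ih => rw [Finset.sum_insert h, Finset.sum_insert h, L_add, ih]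


lemma E_X_of_lt (r k : ℕ) (j : Fin (n+1)) (h : k < r) :
    E K n r (X (j, k) : MvPolynomial σ' K) = 0 := by
  have hz : ∀ (j' : Fin (n+1)) (k' : ℕ),
      (Nat.choose (k' + r) r : MvPolynomial σ' K) *
        (X (j', k') * pderiv (j', k' + r) (X (j, k) : MvPolynomial σ' K)) = 0 := by
    intro j' k'
    rw [pderiv_X_of_ne, mul_zero, mul_zero]
    intro hEq
    have : k = k' + r := by
      have := congrArg Prod.snd hEq
      simpa using this
    omega
  simp only [E, hz, finsum_zero]

lemma E_X_of_le (r s : ℕ) (j : Fin (n+1)) :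
    E K n r (X (j, s + r) : MvPolynomial σ' K)
      = (Nat.choose (s + r) r : MvPolynomial σ' K) * X (j, s) := by
  rw [E]
  rw [finsum_eq_single _ j ?hj]
  case hj =>
    intro j' hj'
    have hz : ∀ k' : ℕ,
        (Nat.choose (k' + r) r : MvPolynomial σ' K) *
          (X (j', k') * pderiv (j', k' + r) (X (j, s + r) : MvPolynomial σ' K)) = 0 := by
      intro k'
      rw [pderiv_X_of_ne, mul_zero, mul_zero]
      intro hEq
      exact hj' (congrArg Prod.fst hEq).symm
    simp only [hz, finsum_zero]
  rw [finsum_eq_single _ s ?hs]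
  case hs =>
    intro k' hk'
    rw [pderiv_X_of_ne, mul_zero, mul_zero]
    intro hEq
    have : s + r = k' + r := by simpa using congrArg Prod.snd hEq
    omega
  rw [pderiv_X_self, mul_one]

lemma L_X_some (r k : ℕ) (j : Fin (n+1)) :
    L K n r (X ((some j : Option (Fin (n+1))), k) : MvPolynomial τ' K) = 0 := by
  have hz : ∀ i : ℕ,
      (Nat.choose (i + r) r : MvPolynomial τ' K) *
        (X ((none : Option (Fin (n+1))), i) *
          pderiv (none, i + r) (X ((some j : Option (Fin (n+1))), k) : MvPolynomial τ' K)) = 0 := by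
    intro i
    rw [pderiv_X_of_ne (by simp), mul_zero, mul_zero]
  simp only [L, hz, finsum_zero]

lemma L_X_none_of_lt (r i : ℕ) (h : i < r) :
    L K n r (X ((none : Option (Fin (n+1))), i) : MvPolynomial τ' K) = 0 := by
  have hz : ∀ i' : ℕ,
      (Nat.choose (i' + r) r : MvPolynomial τ' K) *
        (X ((none : Option (Fin (n+1))), i') *
          pderiv (none, i' + r) (X ((none : Option (Fin (n+1))), i) : MvPolynomial τ' K)) = 0 := by
    intro i'
    rw [pderiv_X_of_ne, mul_zero, mul_zero]
    intro hEq
    have : i = i' + r := by simpa using congrArg Prod.snd hEq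
    omega
  simp only [L, hz, finsum_zero]

lemma L_X_none_of_le (r s : ℕ) :
    L K n r (X ((none : Option (Fin (n+1))), s + r) : MvPolynomial τ' K)
      = (Nat.choose (s + r) r : MvPolynomial τ' K) * X ((none : Option (Fin (n+1))), s) := by
  rw [L]
  rw [finsum_eq_single _ s ?hs]
  case hs =>
    intro i' hi'
    rw [pderiv_X_of_ne, mul_zero, mul_zero]
    intro hEq
    have : s + r = i' + r := by simpa using congrArg Prod.snd hEq
    omega
  rw [pderiv_X_self, mul_one]

lemma L_term (r c i t : ℕ) (j : Fin (n+1)) :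
    L K n r ((c : MvPolynomial τ' K) * X ((none : Option (Fin (n+1))), i) * X (some j, t))
      = (c : MvPolynomial τ' K) *
          (L K n r (X ((none : Option (Fin (n+1))), i)) * X (some j, t)) := by
  rw [L_mul, L_mul, L_natCast, L_X_some, mul_zero, add_zero, zero_mul, zero_add, mul_assoc]


lemma Phi_X (v : Fin (n+1) × ℕ) : Φ K n (X v) = Ssub K n v := aeval_X _ v

lemma key_gen (r : ℕ) (v : Fin (n+1) × ℕ) :
    Φ K n (E K n r (X v)) = L K n r (Ssub K n v) := by
  obtain ⟨j, k⟩ := v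
  rcases lt_or_ge k r with hk | hk
  · rw [E_X_of_lt r k j hk, map_zero, Ssub, L_sum]
    refine (Finset.sum_eq_zero fun i hi => ?_).symm
    rw [L_term, L_X_none_of_lt, zero_mul, mul_zero]
    simp only [Finset.mem_range] at hi
    omega
  · obtain ⟨s, rfl⟩ : ∃ s, k = s + r := ⟨k - r, by omega⟩
    rw [E_X_of_le r s j, map_mul, map_natCast, Phi_X, Ssub, Ssub, L_sum]
    have hterm : ∀ i ∈ Finset.range (s + r + 1),
        L K n r ((Nat.choose (s+r) i : MvPolynomial τ' K) *
            X ((none : Option (Fin (n+1))), i) * X (some j, s + r - i))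
          = (Nat.choose (s+r) i : MvPolynomial τ' K) *
              (L K n r (X ((none : Option (Fin (n+1))), i)) * X (some j, s + r - i)) :=
      fun i _ => L_term r _ i _ j
  -- replace each term
    rw [Finset.sum_congr rfl hterm]
    have hzero : ∀ i ∈ Finset.range (s + r + 1), i ∉ Finset.Ico r (s + r + 1) →
        (Nat.choose (s+r) i : MvPolynomial τ' K) *
          (L K n r (X ((none : Option (Fin (n+1))), i)) * X (some j, s + r - i)) = 0 := by
      intro i hi hni
      simp only [Finset.mem_range] at hi
      simp only [Finset.mem_Ico] at hni
      rw [L_X_none_of_lt r i (by omega), zero_mul, mul_zero]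
    rw [← Finset.sum_subset (by
          intro x hx; simp only [Finset.mem_Ico] at hx; simp only [Finset.mem_range]; omega)
        hzero]
    rw [Finset.sum_Ico_eq_sum_range]
    have hlen : s + r + 1 - r = s + 1 := by omega
    rw [hlen, Finset.mul_sum]
    refine Finset.sum_congr rfl fun t ht => ?_
    simp only [Finset.mem_range] at ht
    have h1 : r + t = t + r := by omega
    rw [h1, L_X_none_of_le r t]
    have h2 : s + r - (t + r) = s - t := by omega
    rw [h2]
    have hcc : Nat.choose (s+r) (t+r) * Nat.choose (t+r) r = Nat.choose (s+r) r * Nat.choose s t := by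
      have := Nat.choose_mul (n := s + r) (k := t + r) (s := r) (by omega)
      simpa [Nat.add_sub_cancel] using this
    have hcast : ((Nat.choose (s+r) (t+r) * Nat.choose (t+r) r : ℕ) : MvPolynomial τ' K)
        = ((Nat.choose (s+r) r * Nat.choose s t : ℕ) : MvPolynomial τ' K) := by rw [hcc]
    push_cast at hcast
    calc (Nat.choose (s+r) r : MvPolynomial τ' K) *
          ((Nat.choose s t : MvPolynomial τ' K) * X ((none : Option (Fin (n+1))), t)
            * X (some j, s - t))
        = ((Nat.choose (s+r) r : MvPolynomial τ' K) * (Nat.choose s t : MvPolynomial τ' K)) *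
            (X ((none : Option (Fin (n+1))), t) * X (some j, s - t)) := by ring
      _ = ((Nat.choose (s+r) (t+r) : MvPolynomial τ' K) * (Nat.choose (t+r) r : MvPolynomial τ' K)) *
            (X ((none : Option (Fin (n+1))), t) * X (some j, s - t)) := by rw [← hcast]
      _ = (Nat.choose (s+r) (t+r) : MvPolynomial τ' K) *
            ((Nat.choose (t+r) r : MvPolynomial τ' K) * X ((none : Option (Fin (n+1))), t)
              * X (some j, s - t)) := by ring


lemma Phi_E (r : ℕ) (f : MvPolynomial σ' K) :
    Φ K n (E K n r f) = L K n r (Φ K n f) := by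
  induction f using MvPolynomial.induction_on with
  | C c =>
      rw [E_C, map_zero]
      have : Φ K n (C c) = C c := by simp [Φ, algHom_C]
      rw [this, L_C]
  | add p q hp hq => rw [E_add, map_add, hp, hq, map_add, L_add]
  | mul_X p v hp =>
      rw [E_mul, map_add, map_mul, map_mul, hp, key_gen, map_mul, Phi_X, L_mul]

lemma eps_Ssub (v : Fin (n+1) × ℕ) : ε' K n (Ssub K n v) = X v := by
  obtain ⟨j, k⟩ := v
  rw [Ssub, map_sum]
  rw [Finset.sum_eq_single_of_mem 0 (Finset.mem_range.2 (by omega))]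
  · simp [ε']
  · intro i hi hi0
    simp [ε', hi0]

lemma eps_Phi (f : MvPolynomial σ' K) : ε' K n (Φ K n f) = f := by
  have : (ε' K n).comp (Φ K n) = AlgHom.id K (MvPolynomial σ' K) := by
    apply MvPolynomial.algHom_ext
    intro v
    simp only [AlgHom.comp_apply, Phi_X, AlgHom.id_apply]
    exact eps_Ssub v
  exact AlgHom.congr_fun this f

lemma eps_rho (f : MvPolynomial σ' K) : ε' K n (ρ K n f) = f := by
  have : (ε' K n).comp (ρ K n) = AlgHom.id K (MvPolynomial σ' K) := by
    apply MvPolynomial.algHom_ext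
    intro v
    simp [ρ, ε']
  exact AlgHom.congr_fun this f

lemma pderiv_Ssub (r : ℕ) (v : Fin (n+1) × ℕ) :
    pderiv ((none : Option (Fin (n+1))), r) (Ssub K n v)
      = if r ≤ v.2 then (Nat.choose v.2 r : MvPolynomial τ' K) * X (some v.1, v.2 - r) else 0 := by
  obtain ⟨j, k⟩ := v
  rw [Ssub]
  have hterm : ∀ i : ℕ,
      pderiv ((none : Option (Fin (n+1))), r)
        ((Nat.choose k i : MvPolynomial τ' K) * X ((none : Option (Fin (n+1))), i)
          * X (some j, k - i))
      = (Nat.choose k i : MvPolynomial τ' K) *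
          (pderiv ((none : Option (Fin (n+1))), r) (X ((none : Option (Fin (n+1))), i))
            * X (some j, k - i)) := by
    intro i
    rw [mul_assoc, ← C_eq_coe_nat, pderiv_C_mul, pderiv_mul,
      pderiv_X_of_ne (show (some j, k - i) ≠ ((none : Option (Fin (n+1))), r) by simp),
      mul_zero, add_zero, C_eq_coe_nat]
  rw [map_sum, Finset.sum_congr rfl fun i _ => hterm i]
  by_cases hk : r ≤ k
  · rw [Finset.sum_eq_single_of_mem r (Finset.mem_range.2 (by omega))]
    · rw [pderiv_X_self, one_mul, if_pos hk]
    · intro i _ hir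
      rw [pderiv_X_of_ne (by simp [hir]), zero_mul, mul_zero]
  · rw [if_neg hk]
    refine Finset.sum_eq_zero fun i hi => ?_
    simp only [Finset.mem_range] at hi
    rw [pderiv_X_of_ne (by simp; omega), zero_mul, mul_zero]


lemma eps_pderiv_Ssub (r : ℕ) (v : Fin (n+1) × ℕ) :
    ε' K n (pderiv ((none : Option (Fin (n+1))), r) (Ssub K n v)) = E K n r (X v) := by
  obtain ⟨j, k⟩ := v
  rw [pderiv_Ssub]
  rcases le_or_gt r k with hk | hk
  · obtain ⟨s, rfl⟩ : ∃ s, k = s + r := ⟨k - r, by omega⟩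
    rw [if_pos hk, E_X_of_le, map_mul, map_natCast]
    have : ε' K n (X ((some j : Option (Fin (n+1))), s + r - r)) = X (j, s) := by
      simp [ε', Nat.add_sub_cancel]
    rw [this]
  · rw [if_neg (by omega), map_zero, E_X_of_lt r k j hk]

lemma eps_pderiv_Phi (r : ℕ) (f : MvPolynomial σ' K) :
    ε' K n (pderiv ((none : Option (Fin (n+1))), r) (Φ K n f)) = E K n r f := by
  induction f using MvPolynomial.induction_on with
  | C c =>
      have : Φ K n (C c) = C c := by simp [Φ, algHom_C]
      rw [this, pderiv_C, map_zero, E_C]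
  | add p q hp hq => rw [map_add, map_add, map_add, hp, hq, E_add]
  | mul_X p v hp =>
      rw [map_mul, Phi_X, pderiv_mul, map_add, map_mul, map_mul, hp, eps_Phi, eps_Ssub,
        eps_pderiv_Ssub, E_mul]

lemma pderiv_none_rho (r : ℕ) (f : MvPolynomial σ' K) :
    pderiv ((none : Option (Fin (n+1))), r) (ρ K n f) = 0 := by
  classical
  refine pderiv_eq_zero_of_notMem_vars fun hv => ?_
  have := vars_rename (R := K) (fun v : Fin (n+1) × ℕ => ((some v.1 : Option (Fin (n+1))), v.2)) f hv
  simp only [Finset.mem_image] at this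
  obtain ⟨w, _, hw⟩ := this
  simp at hw

lemma eps_X0 : ε' K n (X ((none : Option (Fin (n+1))), 0)) = 1 := by simp [ε']

lemma forward_dir (m : ℕ) (f : MvPolynomial σ' K)
    (H : Φ K n f = X ((none : Option (Fin (n+1))), 0) ^ m * ρ K n f) (r : ℕ) :
    E K n r f = if r = 0 then (m : MvPolynomial σ' K) * f else 0 := by
  rw [← eps_pderiv_Phi, H, pderiv_mul, pderiv_none_rho, mul_zero, add_zero, pderiv_pow]
  rcases eq_or_ne r 0 with rfl | hr
  · rw [pderiv_X_self, if_pos rfl, mul_one]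
    rw [map_mul, map_mul, map_natCast, map_pow, eps_X0, one_pow, mul_one, eps_rho]
  · rw [pderiv_X_of_ne (show ((none : Option (Fin (n+1))), 0) ≠ (none, r) by simp [(Ne.symm hr)]),
      mul_zero, zero_mul, map_zero, if_neg hr]


lemma coeff_X_mul_pderiv {ι : Type*} [DecidableEq ι] (i : ι) (P : MvPolynomial ι K)
    (u : ι →₀ ℕ) :
    coeff u (X i * pderiv i P) = (u i : K) * coeff u P := by
  induction P using MvPolynomial.induction_on' with
  | monomial d a =>
      by_cases hdi : d i = 0
      · have h1 : (monomial (d - Finsupp.single i 1)) (a * (d i : K)) = 0 := by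
          rw [hdi]; simp
        rw [pderiv_monomial, h1, mul_zero, coeff_zero, coeff_monomial]
        split_ifs with h
        · rw [← h, hdi]; simp
        · rw [mul_zero]
      · have key : Finsupp.single i 1 + (d - Finsupp.single i 1) = d := by
          ext a'
          simp only [Finsupp.add_apply, Finsupp.single_apply, Finsupp.tsub_apply]
          split_ifs with h
          · subst h; omega
          · omega
      -- note: careful with if direction
        rw [pderiv_monomial, ← pow_one (X i), ← monomial_single_add, key, coeff_monomial,
          coeff_monomial]
        split_ifs with h
        · subst h; ring
        · rw [mul_zero]
  | add p q hp hq =>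
      rw [map_add, mul_add, coeff_add, coeff_add, hp, hq, mul_add]

lemma mono_rec (m : ℕ) (u : (Option (Fin (n+1)) × ℕ) →₀ ℕ)
    (hu0 : u ((none : Option (Fin (n+1))), 0) = m)
    (hur : ∀ r, 1 ≤ r → u ((none : Option (Fin (n+1))), r) = 0) (c : K) :
    (monomial u c : MvPolynomial τ' K)
      = X ((none : Option (Fin (n+1))), 0) ^ m * ρ K n (ε' K n (monomial u c)) := by
  classical
  set emb : Fin (n+1) × ℕ → Option (Fin (n+1)) × ℕ := fun v => (some v.1, v.2) with hemb
  have hinj : Function.Injective emb := by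
    intro a b h
    simp only [emb, Prod.ext_iff, Option.some_inj] at h
    exact Prod.ext h.1 h.2
  set u' : (Fin (n+1) × ℕ) →₀ ℕ := Finsupp.comapDomain emb u hinj.injOn with hu'
  have hsplit : u = Finsupp.single ((none : Option (Fin (n+1))), 0) m
      + Finsupp.mapDomain emb u' := by
    ext w
    obtain ⟨w1, w2⟩ := w
    rw [Finsupp.add_apply, Finsupp.single_apply]
    cases w1 with
    | none =>
        have hmap : Finsupp.mapDomain emb u' ((none : Option (Fin (n+1))), w2) = 0 := by
          refine Finsupp.mapDomain_notin_range _ _ ?_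
          rintro ⟨v, hv⟩
          simp [emb] at hv
        rw [hmap, add_zero]
        rcases eq_or_ne w2 0 with rfl | hne
        · rw [if_pos rfl, hu0]
        · rw [hur w2 (by omega), if_neg (by simp [Ne.symm hne])]
    | some j =>
        have hmap : Finsupp.mapDomain emb u' ((some j : Option (Fin (n+1))), w2)
            = u ((some j : Option (Fin (n+1))), w2) := by
          have : ((some j : Option (Fin (n+1))), w2) = emb (j, w2) := rfl
          rw [this, Finsupp.mapDomain_apply hinj]
          rfl
        rw [hmap, if_neg (by simp), zero_add]
  have key : (monomial u c : MvPolynomial τ' K)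
      = X ((none : Option (Fin (n+1))), 0) ^ m * ρ K n (monomial u' c) := by
    conv_lhs => rw [hsplit]
    rw [X_pow_eq_monomial, ρ, rename_monomial, monomial_mul, one_mul]
  have h2 : ε' K n (monomial u c) = monomial u' c := by
    rw [key, map_mul, map_pow, eps_X0, one_pow, one_mul, eps_rho]
  rw [h2]
  exact key

lemma reconstruct (m : ℕ) (P : MvPolynomial τ' K)
    (h : ∀ u ∈ P.support, u ((none : Option (Fin (n+1))), 0) = m
      ∧ ∀ r, 1 ≤ r → u ((none : Option (Fin (n+1))), r) = 0) :
    P = X ((none : Option (Fin (n+1))), 0) ^ m * ρ K n (ε' K n P) := by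
  conv_lhs => rw [P.as_sum]
  conv_rhs => rw [P.as_sum]
  rw [map_sum, map_sum, Finset.mul_sum]
  exact Finset.sum_congr rfl fun u hu => mono_rec m u (h u hu).1 (h u hu).2 _

lemma backward_dir (m : ℕ) (f : MvPolynomial σ' K)
    (H : ∀ r : ℕ, E K n r f = if r = 0 then (m : MvPolynomial σ' K) * f else 0) :
    Φ K n f = X ((none : Option (Fin (n+1))), 0) ^ m * ρ K n f := by
  classical
  have hl : ∀ r, L K n r (Φ K n f)
      = if r = 0 then (m : MvPolynomial τ' K) * Φ K n f else 0 := by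
    intro r
    rw [← Phi_E, H r]
    split_ifs
    · rw [map_mul, map_natCast]
    · rw [map_zero]
  set P := Φ K n f with hP
  set N : ℕ := (P.vars.sup Prod.snd) + 1 with hN
  have step : ∀ d r, 1 ≤ r → N ≤ r + d →
      pderiv ((none : Option (Fin (n+1))), r) P = 0 := by
    intro d
    induction d with
    | zero =>
        intro r h1 hle
        refine pderiv_eq_zero_of_notMem_vars fun hv => ?_
        have : r ≤ P.vars.sup Prod.snd := Finset.le_sup (f := Prod.snd) hv
        omega
    | succ d ih =>
        intro r h1 hle
        have hhigh : ∀ i, 1 ≤ i → pderiv ((none : Option (Fin (n+1))), i + r) P = 0 :=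
          fun i hi => ih (i + r) (by omega) (by omega)
        have hLr : L K n r P
            = X ((none : Option (Fin (n+1))), 0) * pderiv ((none : Option (Fin (n+1))), r) P := by
          rw [L, finsum_eq_single _ 0 ?h0]
          case h0 => intro i hi; rw [hhigh i (by omega), mul_zero, mul_zero]
          simp
        have h2 := hl r
        rw [if_neg (by omega), hLr] at h2
        exact (mul_eq_zero.mp h2).resolve_left (X_ne_zero _)
  have hp1 : ∀ r, 1 ≤ r → pderiv ((none : Option (Fin (n+1))), r) P = 0 :=
    fun r h1 => step N r h1 (by omega)
  have hl0 : X ((none : Option (Fin (n+1))), 0) * pderiv ((none : Option (Fin (n+1))), 0) P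
      = (m : MvPolynomial τ' K) * P := by
    have hLr : L K n 0 P
        = X ((none : Option (Fin (n+1))), 0) * pderiv ((none : Option (Fin (n+1))), 0) P := by
      rw [L, finsum_eq_single _ 0 ?h0]
      case h0 => intro i hi; rw [hp1 (i + 0) (by omega), mul_zero, mul_zero]
      simp
    rw [← hLr]
    simpa using hl 0
  have hsupp : ∀ u ∈ P.support, u ((none : Option (Fin (n+1))), 0) = m
      ∧ ∀ r, 1 ≤ r → u ((none : Option (Fin (n+1))), r) = 0 := by
    intro u hu
    have hcu : coeff u P ≠ 0 := mem_support_iff.mp hu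
    constructor
    · have h3 := congrArg (coeff u) hl0
      rw [coeff_X_mul_pderiv, ← C_eq_coe_nat, coeff_C_mul] at h3
      have h4 : ((u ((none : Option (Fin (n+1))), 0) : K)) = (m : K) :=
        mul_right_cancel₀ hcu h3
      exact_mod_cast h4
    · intro r h1
      have h0 : X ((none : Option (Fin (n+1))), r) * pderiv ((none : Option (Fin (n+1))), r) P
          = 0 := by rw [hp1 r h1, mul_zero]
      have h3 := congrArg (coeff u) h0
      rw [coeff_X_mul_pderiv, coeff_zero] at h3
      have h4 : ((u ((none : Option (Fin (n+1))), r) : K)) = 0 :=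
        (mul_eq_zero.mp h3).resolve_right hcu
      exact_mod_cast h4
  have hrec := reconstruct m P hsupp
  rw [hP, eps_Phi] at hrec
  exact hrec


end

end Stmt14Aux

/-- **Kolchin's differential analogue of Euler's theorem.**  Model the differential
polynomial ring `K{y₀,…,yₙ}` as `K[y_j^{(k)} : 0 ≤ j ≤ n, k ∈ ℕ]`, i.e. as
`MvPolynomial (Fin (n+1) × ℕ) K`, and `K{λ, y₀,…,yₙ}` with variables indexed by
`Option (Fin (n+1)) × ℕ` (`(none, i)` standing for `λ^{(i)}`).  Substituting
`y_j^{(k)} ↦ δ^k(λ y_j) = ∑_{i ≤ k} C(k,i) λ^{(i)} y_j^{(k-i)}` defines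
`f(λy₀,…,λyₙ)`.  Then `f` is differentially homogeneous of degree `m`, i.e.
`f(λy₀,…,λyₙ) = λ^m f(y₀,…,yₙ)`, if and only if for every `r ∈ ℕ`:
`∑_{j,k} C(k+r,r) · y_j^{(k)} · ∂f/∂y_j^{(k+r)}` equals `m·f` when `r = 0` and `0`
when `r ≠ 0`. -/
theorem stmt14 (K : Type*) [Field K] [CharZero K] (n m : ℕ)
    (f : MvPolynomial (Fin (n + 1) × ℕ) K) :
    (aeval (fun v : Fin (n + 1) × ℕ =>
        ∑ i ∈ Finset.range (v.2 + 1),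
          (Nat.choose v.2 i : MvPolynomial (Option (Fin (n + 1)) × ℕ) K) *
            X ((none : Option (Fin (n + 1))), i) * X (some v.1, v.2 - i)) f
      = X ((none : Option (Fin (n + 1))), 0) ^ m *
          rename (fun v : Fin (n + 1) × ℕ => ((some v.1 : Option (Fin (n + 1))), v.2)) f)
    ↔ ∀ r : ℕ,
        (∑ᶠ (j : Fin (n + 1)) (k : ℕ),
            (Nat.choose (k + r) r : MvPolynomial (Fin (n + 1) × ℕ) K) *
              (X (j, k) * pderiv (j, k + r) f))
          = if r = 0 then (m : MvPolynomial (Fin (n + 1) × ℕ) K) * f else 0 := by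
  constructor
  · intro H r
    exact Stmt14Aux.forward_dir m f H r
  · intro H
    exact Stmt14Aux.backward_dir m f H
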